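/- The Galois group of the Galois closure (over Q) of the field Q(λ_0), where λ_0 = i·√((−1 + √13)/6), is isomorphic to the dihedral group of order 8. -/

import Mathlib

/-- `λ₀ = i·√((−1 + √13)/6)`. -/
noncomputable def lambda0 : ℂ := Complex.I * Real.sqrt ((-1 + Real.sqrt 13) / 6)

section GroupTheory

open Equiv

def rho : Equiv.Perm (Fin 4) := finRotate 4
def tau : Equiv.Perm (Fin 4) := Equiv.mk (fun x => -x) (fun x => -x) (by decide) (by decide)

def d4fun : DihedralGroup 4 → Equiv.Perm (Fin 4)
  | DihedralGroup.r i => rho ^ i.val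
  | DihedralGroup.sr i => tau * rho ^ i.val

def d4hom : DihedralGroup 4 →* Equiv.Perm (Fin 4) where
  toFun := d4fun
  map_one' := by decide
  map_mul' := by decide

lemma d4hom_inj : Function.Injective d4hom := by
  intro a b h
  revert h
  revert a b
  decide

instance : Fact (Nat.Prime 2) := ⟨Nat.prime_two⟩

lemma sylow_iso (H K : Subgroup (Equiv.Perm (Fin 4))) (hH : Nat.card H = 8)
    (hK : Nat.card K = 8) : Nonempty (H ≃* K) := by
  have hcard : Nat.card (Equiv.Perm (Fin 4)) = 24 := by
    simp [Nat.card_eq_fintype_card, Fintype.card_perm]; rfl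
  have hfact : (Nat.card (Equiv.Perm (Fin 4))).factorization 2 = 3 := by
    rw [hcard, show (24:ℕ) = 2^3 * 3 by norm_num,
      Nat.factorization_mul (by norm_num) (by norm_num),
      Nat.Prime.factorization_pow Nat.prime_two, Nat.Prime.factorization Nat.prime_three]
    simp
  have h8 : (8:ℕ) = 2 ^ (Nat.card (Equiv.Perm (Fin 4))).factorization 2 := by
    rw [hfact]; norm_num
  let S1 : Sylow 2 (Equiv.Perm (Fin 4)) := Sylow.ofCard H (hH.trans h8)
  let S2 : Sylow 2 (Equiv.Perm (Fin 4)) := Sylow.ofCard K (hK.trans h8)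
  exact ⟨Sylow.equiv S1 S2⟩

lemma iso_to_d4 {G : Type*} [Group G] [Fintype G] (f : G →* Equiv.Perm (Fin 4))
    (hf : Function.Injective f) (hG : Fintype.card G = 8) :
    Nonempty (G ≃* DihedralGroup 4) := by
  have h1 : Nat.card f.range = 8 := by
    rw [Nat.card_congr (MonoidHom.ofInjective hf).toEquiv.symm, Nat.card_eq_fintype_card, hG]
  have h2 : Nat.card d4hom.range = 8 := by
    rw [Nat.card_congr (MonoidHom.ofInjective d4hom_inj).toEquiv.symm]
    rw [Nat.card_eq_fintype_card, DihedralGroup.card]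
  obtain ⟨e⟩ := sylow_iso f.range d4hom.range h1 h2
  exact ⟨(MonoidHom.ofInjective hf).trans <| e.trans (MonoidHom.ofInjective d4hom_inj).symm⟩

/-- `Equiv.permCongr` as a `MulEquiv`. -/
def permCongrMulEquiv {α β : Type*} (e : α ≃ β) : Equiv.Perm α ≃* Equiv.Perm β :=
  { e.permCongr with
    map_mul' := fun p q => by
      ext x
      simp [Equiv.permCongr_apply] }

end GroupTheory

section FieldTheory

open Polynomial IntermediateField

noncomputable def sc : ℂ := ((Real.sqrt 13 : ℝ) : ℂ)
noncomputable def mu : ℂ := ((Real.sqrt ((1 + Real.sqrt 13) / 6) : ℝ) : ℂ)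
noncomputable def qp : Polynomial ℚ := X ^ 4 - C (1/3) * X ^ 2 - C (1/3)

lemma one_lt_sqrt13 : (1:ℝ) < Real.sqrt 13 := by
  rw [show (1:ℝ) = Real.sqrt 1 by simp]
  exact Real.sqrt_lt_sqrt (by norm_num) (by norm_num)

lemma hs2 : sc ^ 2 = 13 := by
  rw [sc]
  norm_cast
  rw [Real.sq_sqrt] <;> norm_num

lemma hl2 : lambda0 ^ 2 = (1 - sc) / 6 := by
  rw [lambda0, sc, mul_pow, Complex.I_sq]
  rw [← Complex.ofReal_pow, Real.sq_sqrt (by nlinarith [one_lt_sqrt13])]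
  push_cast
  ring

lemma hm2 : mu ^ 2 = (1 + sc) / 6 := by
  rw [mu, sc, ← Complex.ofReal_pow, Real.sq_sqrt (by nlinarith [one_lt_sqrt13])]
  push_cast
  ring

lemma lambda0_im : 0 < lambda0.im := by
  rw [lambda0]
  simp only [Complex.mul_im, Complex.I_re, Complex.I_im, Complex.ofReal_re, Complex.ofReal_im]
  have h : (0:ℝ) < (-1 + Real.sqrt 13)/6 := by nlinarith [one_lt_sqrt13]
  simpa using Real.sqrt_pos.2 h

lemma mu_im : mu.im = 0 := by simp [mu]
lemma sc_im : sc.im = 0 := by simp [sc]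

lemma mu_pos : 0 < mu.re := by
  rw [mu]
  have h : (0:ℝ) < (1 + Real.sqrt 13)/6 := by nlinarith [one_lt_sqrt13]
  simpa using Real.sqrt_pos.2 h

/-- The real numbers as an intermediate field of `ℂ` over `ℚ`. -/
noncomputable def RR : IntermediateField ℚ ℂ :=
  Subfield.toIntermediateField Complex.ofRealHom.fieldRange
    (fun x => ⟨(x : ℝ), by simp⟩)

lemma mem_RR_iff {z : ℂ} : z ∈ RR ↔ z.im = 0 := by
  constructor
  · rintro ⟨r, rfl⟩; simp
  · intro h
    exact ⟨z.re, by simp [Complex.ext_iff, h]⟩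

lemma lambda0_not_mem_RR : lambda0 ∉ RR := by
  rw [mem_RR_iff]
  exact ne_of_gt lambda0_im

lemma minpoly_quad {F E : Type*} [Field F] [Field E] [Algebra F E] {α : E} {c : F}
    (h2 : algebraMap F E c = α ^ 2) (h1 : α ∉ Set.range (algebraMap F E)) :
    IsIntegral F α ∧ (minpoly F α).natDegree = 2 := by
  have hmonic : (X ^ 2 - C c : F[X]).Monic := monic_X_pow_sub_C c (by norm_num)
  have heval : Polynomial.aeval α (X ^ 2 - C c : F[X]) = 0 := by
    simp [aeval_C, h2]
  have hint : IsIntegral F α := ⟨X ^ 2 - C c, hmonic, by simpa [Polynomial.eval₂] using heval⟩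
  refine ⟨hint, le_antisymm ?_ ?_⟩
  · have := Polynomial.natDegree_le_of_dvd (minpoly.dvd F α heval) hmonic.ne_zero
    simpa [natDegree_X_pow_sub_C] using this
  · rw [minpoly.two_le_natDegree_iff hint]
    intro h
    obtain ⟨x, hx⟩ := h
    exact h1 ⟨x, hx⟩

lemma mem_range_iff_mem {K : IntermediateField ℚ ℂ} {z : ℂ} :
    z ∈ Set.range (algebraMap K ℂ) ↔ z ∈ K := by
  constructor
  · rintro ⟨⟨x, hx⟩, rfl⟩; exact hx
  · intro h; exact ⟨⟨z, h⟩, rfl⟩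

lemma finrank_quad {F : IntermediateField ℚ ℂ} {α : ℂ} {c : F}
    (h2 : algebraMap F ℂ c = α ^ 2) (h1 : α ∉ (F : IntermediateField ℚ ℂ)) :
    Module.finrank F F⟮α⟯ = 2 := by
  have h1' : α ∉ Set.range (algebraMap F ℂ) := fun h => h1 (mem_range_iff_mem.1 h)
  obtain ⟨hint, hdeg⟩ := minpoly_quad h2 h1'
  rw [IntermediateField.adjoin.finrank hint, hdeg]

lemma sc_not_range : sc ∉ Set.range (algebraMap ℚ ℂ) := by
  rintro ⟨r, hr⟩
  have h13 : Irrational (Real.sqrt 13) := (by norm_num : Nat.Prime 13).irrational_sqrt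
  apply h13
  refine ⟨r, ?_⟩
  have : ((r : ℝ) : ℂ) = ((Real.sqrt 13 : ℝ) : ℂ) := by
    rw [show ((Real.sqrt 13 : ℝ) : ℂ) = sc from rfl, ← hr]
    simp
  exact_mod_cast this

lemma rat_lin_indep {c d : ℚ} (h : (c : ℂ) + (d : ℂ) * sc = 0) : c = 0 ∧ d = 0 := by
  have hd : d = 0 := by
    by_contra hd
    apply sc_not_range
    refine ⟨-c / d, ?_⟩
    have hd' : (d : ℂ) ≠ 0 := by exact_mod_cast hd
    rw [eq_ratCast, Rat.cast_div, Rat.cast_neg, neg_div, neg_eq_iff_eq_neg, div_eq_iff hd']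
    linear_combination h
  subst hd
  simp at h
  exact ⟨by exact_mod_cast h, rfl⟩

lemma finrank_K1 : Module.finrank ℚ ℚ⟮sc⟯ = 2 := by
  have h2 : algebraMap ℚ ℂ 13 = sc ^ 2 := by rw [hs2]; norm_num
  obtain ⟨hint, hdeg⟩ := minpoly_quad h2 sc_not_range
  rw [IntermediateField.adjoin.finrank hint, hdeg]

lemma sc_int : IsIntegral ℚ sc := by
  have h2 : algebraMap ℚ ℂ 13 = sc ^ 2 := by rw [hs2]; norm_num
  exact (minpoly_quad h2 sc_not_range).1

lemma sc_minpoly_deg : (minpoly ℚ sc).natDegree = 2 := by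
  have h2 : algebraMap ℚ ℂ 13 = sc ^ 2 := by rw [hs2]; norm_num
  exact (minpoly_quad h2 sc_not_range).2

lemma mu_not_mem_K1 : mu ∉ ℚ⟮sc⟯ := by
  intro hmu
  set pb := IntermediateField.adjoin.powerBasis sc_int with hpb
  obtain ⟨f, hfdeg, hfx⟩ := pb.exists_eq_aeval (⟨mu, hmu⟩ : ℚ⟮sc⟯)
  have hdim : pb.dim = 2 := by
    rw [hpb, IntermediateField.adjoin.powerBasis_dim, sc_minpoly_deg]
  rw [hdim] at hfdeg
  have hf1 : f.natDegree ≤ 1 := by omega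
  set a := f.coeff 0 with ha
  set b := f.coeff 1 with hb
  have hfeq : f = C b * X + C a := Polynomial.eq_X_add_C_of_natDegree_le_one hf1
  -- push to ℂ
  have hmu_eq : mu = (a : ℂ) + (b : ℂ) * sc := by
    have := congrArg (algebraMap ℚ⟮sc⟯ ℂ) hfx
    erw [← Polynomial.aeval_algebraMap_apply ℂ pb.gen f] at this
    rw [hfeq] at this
    simp only [map_add, map_mul, aeval_C, aeval_X] at this
    have hgen : algebraMap ℚ⟮sc⟯ ℂ pb.gen = sc := by
      rw [hpb, IntermediateField.adjoin.powerBasis_gen]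
      rfl
    rw [hgen] at this
    simpa [add_comm, mul_comm] using this
  -- square it
  have hsq : ((a^2 + 13*b^2 - 1/6 : ℚ) : ℂ) + ((2*a*b - 1/6 : ℚ) : ℂ) * sc = 0 := by
    have h := hm2
    rw [hmu_eq] at h
    push_cast
    linear_combination h - b^2 * hs2
  obtain ⟨hc, hd⟩ := rat_lin_indep hsq
  have h1 : a^2 + 13*b^2 = 1/6 := by linarith
  have h2 : 2*a*b = 1/6 := by linarith
  nlinarith [sq_nonneg (a - b), sq_nonneg b]

set_option synthInstance.maxHeartbeats 1000000 in
lemma tower_step (S : Set ℂ) (α : ℂ) :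
    Module.finrank ℚ (IntermediateField.adjoin ℚ (S ∪ {α})) =
      Module.finrank ℚ (IntermediateField.adjoin ℚ S) *
        Module.finrank (IntermediateField.adjoin ℚ S) (IntermediateField.adjoin ℚ S)⟮α⟯ := by
  rw [← IntermediateField.adjoin_adjoin_left]
  exact (Module.finrank_mul_finrank ℚ (IntermediateField.adjoin ℚ S) ((IntermediateField.adjoin ℚ S)⟮α⟯)).symm

lemma finrank_quad' {F : IntermediateField ℚ ℂ} {α : ℂ} (h2 : α ^ 2 ∈ F) (h1 : α ∉ F) :
    Module.finrank F F⟮α⟯ = 2 :=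
  finrank_quad (c := ⟨α ^ 2, h2⟩) rfl h1

lemma ratC_mem (K : IntermediateField ℚ ℂ) (r : ℚ) : (r : ℂ) ∈ K := by
  simpa using K.algebraMap_mem r

lemma sc_mem_mu : sc ∈ ℚ⟮mu⟯ := by
  have h : sc = 6 * mu ^ 2 - 1 := by linear_combination -6 * hm2
  rw [h]
  have hmu : mu ∈ ℚ⟮mu⟯ := IntermediateField.mem_adjoin_simple_self ℚ mu
  have h6 : ((6:ℚ):ℂ) ∈ ℚ⟮mu⟯ := ratC_mem _ 6
  have := sub_mem (mul_mem h6 (pow_mem hmu 2)) (one_mem ℚ⟮mu⟯)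
  simpa using this

lemma mu_mem_RR : mu ∈ RR := mem_RR_iff.2 mu_im
lemma sc_mem_RR : sc ∈ RR := mem_RR_iff.2 sc_im

lemma K1_le_RR : ℚ⟮sc⟯ ≤ RR := by
  rw [IntermediateField.adjoin_le_iff]
  simpa using sc_mem_RR

lemma Qmu_le_RR : ℚ⟮mu⟯ ≤ RR := by
  rw [IntermediateField.adjoin_le_iff]
  simpa using mu_mem_RR

lemma lambda0_not_mem_K1 : lambda0 ∉ ℚ⟮sc⟯ := fun h => lambda0_not_mem_RR (K1_le_RR h)
lemma lambda0_not_mem_Qmu : lambda0 ∉ ℚ⟮mu⟯ := fun h => lambda0_not_mem_RR (Qmu_le_RR h)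

lemma musq_mem_K1 : mu ^ 2 ∈ ℚ⟮sc⟯ := by
  rw [hm2]
  have hs : sc ∈ ℚ⟮sc⟯ := IntermediateField.mem_adjoin_simple_self ℚ sc
  have h6 : ((6:ℚ):ℂ) ∈ ℚ⟮sc⟯ := ratC_mem _ 6
  have := div_mem (add_mem (one_mem ℚ⟮sc⟯) hs) h6
  simpa using this

lemma lsq_mem_K1 : lambda0 ^ 2 ∈ ℚ⟮sc⟯ := by
  rw [hl2]
  have hs : sc ∈ ℚ⟮sc⟯ := IntermediateField.mem_adjoin_simple_self ℚ sc
  have h6 : ((6:ℚ):ℂ) ∈ ℚ⟮sc⟯ := ratC_mem _ 6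
  have := div_mem (sub_mem (one_mem ℚ⟮sc⟯) hs) h6
  simpa using this

lemma lsq_mem_Qmu : lambda0 ^ 2 ∈ ℚ⟮mu⟯ := by
  rw [hl2]
  have h6 : ((6:ℚ):ℂ) ∈ ℚ⟮mu⟯ := ratC_mem _ 6
  have := div_mem (sub_mem (one_mem ℚ⟮mu⟯) sc_mem_mu) h6
  simpa using this

lemma adjoin_sc_mu_eq : IntermediateField.adjoin ℚ ({sc} ∪ {mu}) = ℚ⟮mu⟯ := by
  apply le_antisymm
  · rw [IntermediateField.adjoin_le_iff]
    rintro x (rfl | rfl)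
    · exact sc_mem_mu
    · exact IntermediateField.mem_adjoin_simple_self ℚ mu
  · exact IntermediateField.adjoin.mono _ _ _ (by simp)

lemma adjoin_sc_l_eq : IntermediateField.adjoin ℚ ({sc} ∪ {lambda0}) = ℚ⟮lambda0⟯ := by
  apply le_antisymm
  · rw [IntermediateField.adjoin_le_iff]
    rintro x (rfl | rfl)
    · have h : sc = 1 - 6 * lambda0 ^ 2 := by linear_combination 6 * hl2
      rw [h]
      have hl : lambda0 ∈ ℚ⟮lambda0⟯ := IntermediateField.mem_adjoin_simple_self ℚ lambda0
      have h6 : ((6:ℚ):ℂ) ∈ ℚ⟮lambda0⟯ := ratC_mem _ 6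
      have := sub_mem (one_mem ℚ⟮lambda0⟯) (mul_mem h6 (pow_mem hl 2))
      simpa using this
    · exact IntermediateField.mem_adjoin_simple_self ℚ lambda0
  · exact IntermediateField.adjoin.mono _ _ _ (by simp)

lemma finrank_Qmu : Module.finrank ℚ ℚ⟮mu⟯ = 4 := by
  rw [← adjoin_sc_mu_eq, tower_step]
  have h1 : Module.finrank ℚ (IntermediateField.adjoin ℚ {sc}) = 2 := finrank_K1
  have h2 : Module.finrank (IntermediateField.adjoin ℚ {sc}) (IntermediateField.adjoin ℚ {sc})⟮mu⟯ = 2 :=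
    finrank_quad' musq_mem_K1 mu_not_mem_K1
  rw [h1, h2]

lemma finrank_Ql : Module.finrank ℚ ℚ⟮lambda0⟯ = 4 := by
  rw [← adjoin_sc_l_eq, tower_step]
  have h1 : Module.finrank ℚ (IntermediateField.adjoin ℚ {sc}) = 2 := finrank_K1
  have h2 : Module.finrank (IntermediateField.adjoin ℚ {sc}) (IntermediateField.adjoin ℚ {sc})⟮lambda0⟯ = 2 :=
    finrank_quad' lsq_mem_K1 lambda0_not_mem_K1
  rw [h1, h2]

lemma finrank_L : Module.finrank ℚ (IntermediateField.adjoin ℚ ({mu} ∪ {lambda0})) = 8 := by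
  rw [tower_step]
  have h2 : Module.finrank (IntermediateField.adjoin ℚ {mu}) (IntermediateField.adjoin ℚ {mu})⟮lambda0⟯ = 2 :=
    finrank_quad' lsq_mem_Qmu lambda0_not_mem_Qmu
  rw [h2, finrank_Qmu]

lemma qp_natDegree : qp.natDegree = 4 := by
  rw [qp]
  compute_degree!

lemma qp_monic : qp.Monic := by
  rw [qp]; monicity!

lemma qp_ne_zero : qp ≠ 0 := qp_monic.ne_zero

lemma aeval_qp (x : ℂ) : Polynomial.aeval x qp = (x ^ 2 - lambda0 ^ 2) * (x ^ 2 - mu ^ 2) := by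
  rw [qp]
  simp only [map_sub, map_mul, map_pow, aeval_X, aeval_C]
  have h3 : (algebraMap ℚ ℂ) (1/3) = 1/3 := by
    simp
  rw [h3]
  linear_combination (x^2 - mu^2) * hl2 + (x^2 - (1-sc)/6) * hm2 + (1/36) * hs2

lemma aeval_qp_lambda0 : Polynomial.aeval lambda0 qp = 0 := by
  rw [aeval_qp]; ring

lemma aeval_qp_mu : Polynomial.aeval mu qp = 0 := by
  rw [aeval_qp]; ring

lemma lambda0_int : IsIntegral ℚ lambda0 :=
  ⟨qp, qp_monic, by rw [← Polynomial.aeval_def]; exact aeval_qp_lambda0⟩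

lemma minpoly_lambda0 : minpoly ℚ lambda0 = qp := by
  have hdvd : minpoly ℚ lambda0 ∣ qp := minpoly.dvd ℚ lambda0 aeval_qp_lambda0
  have hdeg : (minpoly ℚ lambda0).natDegree = 4 := by
    have := IntermediateField.adjoin.finrank lambda0_int
    rw [finrank_Ql] at this
    omega
  obtain ⟨u, hu⟩ := hdvd
  have hu_ne : u ≠ 0 := by
    intro h
    rw [h, mul_zero] at hu
    exact qp_ne_zero hu
  have hmin_ne : minpoly ℚ lambda0 ≠ 0 := minpoly.ne_zero lambda0_int
  have hdegu : u.natDegree = 0 := by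
    have := congrArg Polynomial.natDegree hu
    rw [Polynomial.natDegree_mul hmin_ne hu_ne, qp_natDegree, hdeg] at this
    omega
  have hulead : u.leadingCoeff = 1 := by
    have := congrArg Polynomial.leadingCoeff hu
    rw [Polynomial.leadingCoeff_mul, qp_monic.leadingCoeff,
      (minpoly.monic lambda0_int).leadingCoeff, one_mul] at this
    exact this.symm
  have hu1 : u = 1 := by
    rw [Polynomial.eq_C_of_natDegree_eq_zero hdegu] at hulead ⊢
    rw [Polynomial.leadingCoeff_C] at hulead
    rw [hulead, map_one]
  rw [hu, hu1, mul_one]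

lemma qp_root_cases {x : ℂ} (hx : Polynomial.aeval x qp = 0) :
    x = lambda0 ∨ x = -lambda0 ∨ x = mu ∨ x = -mu := by
  rw [aeval_qp] at hx
  have h : (x - lambda0) * (x + lambda0) * ((x - mu) * (x + mu)) = 0 := by
    linear_combination hx
  rcases mul_eq_zero.1 h with h1 | h2
  · rcases mul_eq_zero.1 h1 with h | h
    · exact Or.inl (by linear_combination h)
    · exact Or.inr (Or.inl (by linear_combination h))
  · rcases mul_eq_zero.1 h2 with h | h
    · exact Or.inr (Or.inr (Or.inl (by linear_combination h)))
    · exact Or.inr (Or.inr (Or.inr (by linear_combination h)))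

lemma adjoin_rootSet_eq :
    IntermediateField.adjoin ℚ (qp.rootSet ℂ) = IntermediateField.adjoin ℚ ({mu} ∪ {lambda0}) := by
  apply le_antisymm
  · rw [IntermediateField.adjoin_le_iff]
    intro x hx
    have hmem_mu : mu ∈ IntermediateField.adjoin ℚ ({mu} ∪ {lambda0}) :=
      IntermediateField.subset_adjoin _ _ (by simp)
    have hmem_l : lambda0 ∈ IntermediateField.adjoin ℚ ({mu} ∪ {lambda0}) :=
      IntermediateField.subset_adjoin _ _ (by simp)
    have hx0 : Polynomial.aeval x qp = 0 := (Polynomial.mem_rootSet.1 hx).2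
    rcases qp_root_cases hx0 with rfl | rfl | rfl | rfl
    · exact hmem_l
    · exact neg_mem hmem_l
    · exact hmem_mu
    · exact neg_mem hmem_mu
  · rw [IntermediateField.adjoin_le_iff]
    rintro x (rfl | rfl)
    · exact IntermediateField.subset_adjoin _ _
        (Polynomial.mem_rootSet.2 ⟨qp_ne_zero, aeval_qp_mu⟩)
    · exact IntermediateField.subset_adjoin _ _
        (Polynomial.mem_rootSet.2 ⟨qp_ne_zero, aeval_qp_lambda0⟩)

lemma finrank_splittingField : Module.finrank ℚ qp.SplittingField = 8 := by
  have hsplits : (qp.map (algebraMap ℚ ℂ)).Splits := IsAlgClosed.splits _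
  haveI : Polynomial.IsSplittingField ℚ (IntermediateField.adjoin ℚ (qp.rootSet ℂ)) qp :=
    IntermediateField.adjoin_rootSet_isSplittingField hsplits
  have e := Polynomial.IsSplittingField.algEquiv
    (IntermediateField.adjoin ℚ (qp.rootSet ℂ)) qp
  rw [← e.toLinearEquiv.finrank_eq]
  rw [adjoin_rootSet_eq]
  exact finrank_L

lemma qp_irred : Irreducible qp := minpoly_lambda0 ▸ minpoly.irreducible lambda0_int

lemma qp_sep : qp.Separable := qp_irred.separable

lemma card_gal : Fintype.card qp.Gal = 8 := by
  rw [← Nat.card_eq_fintype_card, Polynomial.Gal.card_of_separable qp_sep]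
  exact finrank_splittingField

lemma card_rootSet_SF : Fintype.card (qp.rootSet qp.SplittingField) = 4 := by
  exact (Polynomial.card_rootSet_eq_natDegree qp_sep (Polynomial.SplittingField.splits qp)).trans qp_natDegree

end FieldTheory

/-- The Galois group of the Galois closure of `ℚ(λ₀)` over `ℚ` (that is, of the
splitting field of the minimal polynomial of `λ₀`) is the dihedral group of order 8. -/
theorem galois_group_of_lambda0_closure_is_dihedral :
    Nonempty (((minpoly ℚ lambda0).SplittingField ≃ₐ[ℚ] (minpoly ℚ lambda0).SplittingField)
      ≃* DihedralGroup 4) := by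
  rw [minpoly_lambda0]
  haveI : Fact ((qp.map (algebraMap ℚ qp.SplittingField)).Splits) :=
    ⟨Polynomial.SplittingField.splits qp⟩
  set e4 : qp.rootSet qp.SplittingField ≃ Fin 4 := Fintype.equivFinOfCardEq card_rootSet_SF
  set f : qp.Gal →* Equiv.Perm (Fin 4) :=
    (permCongrMulEquiv e4).toMonoidHom.comp (Polynomial.Gal.galActionHom qp qp.SplittingField)
    with hf
  have hinj : Function.Injective f :=
    (permCongrMulEquiv e4).injective.comp
      (Polynomial.Gal.galActionHom_injective qp qp.SplittingField)
  exact iso_to_d4 f hinj card_gal
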